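/- Let p = (p_1, ..., p_n) be a probability distribution with all p_i > 0, ∑ p_i = 1, and p_min := min_i p_i < 1/n (i.e., p is not uniform). Then the message importance measure is asymptotically linear in ϖ with slope 1 − p_min; precisely, lim_{ϖ → ∞} L(p, ϖ) / ( ϖ(1 − p_min) + log p_min ) = 1. -/

import Mathlib

open Filter

/-- Asymptotic linearity of the message importance measure: if
`pmin = min_i p_i < 1/n`, then `L(p, ϖ) / (ϖ (1 - pmin) + log pmin) → 1`
as `ϖ → ∞`. -/
theorem mim_asymptotic {n : ℕ} (p : Fin n → ℝ) (pmin : ℝ)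
    (hp : ∀ i, 0 < p i) (hsum : ∑ i, p i = 1)
    (hmin : IsLeast (Set.range p) pmin)
    (hlt : pmin < 1 / (n : ℝ)) :
    Tendsto (fun ϖ : ℝ =>
        Real.log (∑ i, p i * Real.exp (ϖ * (1 - p i))) /
          (ϖ * (1 - pmin) + Real.log pmin))
      atTop (nhds 1) := by
  obtain ⟨⟨i0, hi0⟩, hle⟩ := hmin
  have hpmin_pos : 0 < pmin := hi0 ▸ hp i0
  have hn : 0 < n := i0.pos
  have hn1 : (1:ℝ)/n ≤ 1 := by
    rw [div_le_one (by exact_mod_cast hn)]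
    exact_mod_cast hn
  have hpmin_lt1 : pmin < 1 := lt_of_lt_of_le hlt hn1
  have hslope : 0 < 1 - pmin := by linarith
  set d : ℝ → ℝ := fun ϖ => ϖ * (1 - pmin) + Real.log pmin with hd_def
  have hd : Tendsto d atTop atTop :=
    tendsto_atTop_add_const_right _ _ (tendsto_id.atTop_mul_const hslope)
  have hdiv : Tendsto (fun ϖ => Real.log pmin / d ϖ) atTop (nhds 0) :=
    Tendsto.div_atTop tendsto_const_nhds hd
  have hupper : Tendsto (fun ϖ => 1 - Real.log pmin / d ϖ) atTop (nhds 1) := by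
    simpa using tendsto_const_nhds.sub hdiv
  refine tendsto_of_tendsto_of_tendsto_of_le_of_le'
    (tendsto_const_nhds : Tendsto (fun _ : ℝ => (1:ℝ)) atTop (nhds 1)) hupper ?_ ?_
  · filter_upwards [eventually_ge_atTop (0:ℝ), hd.eventually_gt_atTop 0] with ϖ hϖ hdpos
    have hsumlb : pmin * Real.exp (ϖ * (1 - pmin)) ≤
        ∑ i, p i * Real.exp (ϖ * (1 - p i)) := by
      rw [← hi0]
      exact Finset.single_le_sum (f := fun i => p i * Real.exp (ϖ * (1 - p i)))
        (fun i _ => mul_nonneg (hp i).le (Real.exp_pos _).le) (Finset.mem_univ i0)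
    have hL : d ϖ ≤ Real.log (∑ i, p i * Real.exp (ϖ * (1 - p i))) := by
      have h := Real.log_le_log (by positivity) hsumlb
      rwa [Real.log_mul (ne_of_gt hpmin_pos) (Real.exp_ne_zero _), Real.log_exp,
        add_comm] at h
    rw [le_div_iff₀ hdpos, one_mul]
    exact hL
  · filter_upwards [eventually_ge_atTop (0:ℝ), hd.eventually_gt_atTop 0] with ϖ hϖ hdpos
    have hsumub : ∑ i, p i * Real.exp (ϖ * (1 - p i)) ≤ Real.exp (ϖ * (1 - pmin)) := by
      calc ∑ i, p i * Real.exp (ϖ * (1 - p i))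
          ≤ ∑ i, p i * Real.exp (ϖ * (1 - pmin)) := by
            refine Finset.sum_le_sum fun i _ => ?_
            have h1 : ϖ * (1 - p i) ≤ ϖ * (1 - pmin) :=
              mul_le_mul_of_nonneg_left
                (by linarith [hle (Set.mem_range_self i)]) hϖ
            exact mul_le_mul_of_nonneg_left (Real.exp_le_exp.mpr h1) (hp i).le
        _ = Real.exp (ϖ * (1 - pmin)) := by rw [← Finset.sum_mul, hsum, one_mul]
    have hspos : 0 < ∑ i, p i * Real.exp (ϖ * (1 - p i)) :=
      Finset.sum_pos (fun i _ => mul_pos (hp i) (Real.exp_pos _))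
        ⟨i0, Finset.mem_univ i0⟩
    have hL : Real.log (∑ i, p i * Real.exp (ϖ * (1 - p i))) ≤ ϖ * (1 - pmin) := by
      have h := Real.log_le_log hspos hsumub
      rwa [Real.log_exp] at h
    rw [div_le_iff₀ hdpos]
    have heq : (1 - Real.log pmin / d ϖ) * d ϖ = ϖ * (1 - pmin) := by
      field_simp [hd_def]
      simp only [hd_def]
      ring
    rw [heq]
    exact hL
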